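/- Let c be a nice 3-coloring of a connected 3-chromatic graph G, let r be the unique sink of D_c, and let b ∈ B_c (a vertex with no colorful path). Then the unique out-neighbour of b in D_c is r, every in-neighbour of b is a source of D_c, and the set {b} ∪ N^-_{D_c}(b) is an initial section of D_c. -/

import Mathlib

/-- A directed cycle: a closed walk of positive length in the digraph `D`. -/
def HasDCycle {V : Type} (D : V → V → Prop) : Prop :=
  ∃ (x : V) (l : List V), List.Chain D x (l ++ [x])

lemma transGen_chain {V : Type} {D : V → V → Prop} {x y : V}
    (h : Relation.TransGen D x y) : ∃ l : List V, List.Chain D x (l ++ [y]) := by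
  induction h with
  | single h => exact ⟨[], List.Chain.cons h List.Chain.nil⟩
  | @tail m z h₁ h₂ ih =>
    obtain ⟨l, hl⟩ := ih
    refine ⟨l ++ [m], ?_⟩
    have : l ++ [m] ++ [z] = l ++ m :: z :: [] := by simp
    rw [this]; unfold List.Chain at hl ⊢; rw [← List.cons_append, List.isChain_append_cons_cons]
    exact ⟨hl, h₂, List.Chain.nil⟩

lemma reach_sink {V : Type} [Fintype V] {D : V → V → Prop} (hacyc : ¬ HasDCycle D)
    (r : V) (hru : ∀ x, (∀ y, ¬ D x y) → x = r) :
    ∀ x, Relation.ReflTransGen D x r := by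
  have hirr : IsIrrefl V (fun a b => Relation.TransGen D b a) := by
    constructor
    intro a ha
    obtain ⟨l, hl⟩ := transGen_chain ha
    exact hacyc ⟨a, l, hl⟩
  have htr : IsTrans V (fun a b => Relation.TransGen D b a) :=
    ⟨fun a b c h₁ h₂ => h₂.trans h₁⟩
  have hwf : WellFounded (fun a b => Relation.TransGen D b a) :=
    Finite.wellFounded_of_trans_of_irrefl _
  intro x
  induction x using hwf.induction with
  | _ x ih =>
    by_cases hx : ∀ y, ¬ D x y
    · rw [hru x hx]
    · push_neg at hx
      obtain ⟨y, hy⟩ := hx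
      exact Relation.ReflTransGen.head hy (ih y (Relation.TransGen.single hy))

lemma two_arcs_to_r {V : Type} {D : V → V → Prop} {r : V} :
    ∀ w, Relation.ReflTransGen D w r → ∀ t u, D t u → D u w →
      ∃ p q, D p q ∧ D q r := by
  intro w hw
  induction hw using Relation.ReflTransGen.head_induction_on with
  | refl => exact fun t u ht hu => ⟨t, u, ht, hu⟩
  | head h _ ih => exact fun t u _ hu => ih u _ hu h

/-- For a nice 3-coloring `c` of a connected 3-chromatic graph `G` with unique
sink `r` and height at least 5, every vertex `b` with no colorful path has `r`
as its unique out-neighbour, all its in-neighbours are sources, and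
`{b} ∪ N⁻(b)` is an initial section of `D_c`. -/
theorem Bc_structure {V : Type} [Fintype V] (G : SimpleGraph V)
    (hG : G.Connected) (hχ : G.chromaticNumber = 3)
    (c : V → ZMod 3) (hc : ∀ u w, G.Adj u w → c u ≠ c w)
    (D : V → V → Prop) (hD : D = fun a b => G.Adj a b ∧ c b = c a + 1)
    (hacyc : ¬ HasDCycle D)
    (r : V) (hr : ∀ y, ¬ D r y) (hru : ∀ x, (∀ y, ¬ D x y) → x = r)
    (hheight : ∃ l : List V, l.Chain' D ∧ l.length = 5)
    (b : V)
    (hb : ¬ ∃ (y : V) (p : G.Walk b y),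
        p.support.length = 3 ∧ (p.support.map c).Nodup) :
    (D b r ∧ ∀ y, D b y → y = r) ∧
    (∀ y, D y b → ∀ z, ¬ D z y) ∧
    (∀ u w, (u ≠ b ∧ ¬ D u b) → (w = b ∨ D w b) → ¬ D u w) := by
  subst hD
  -- key consequence of hb: every neighbour of a neighbour of b has colour c b
  have key : ∀ x, G.Adj b x → ∀ y, G.Adj x y → c y = c b := by
    intro x hbx y hxy
    by_contra hne
    apply hb
    refine ⟨y, SimpleGraph.Walk.cons hbx (SimpleGraph.Walk.cons hxy SimpleGraph.Walk.nil), ?_, ?_⟩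
    · simp
    · have h1 : c b ≠ c x := hc b x hbx
      have h2 : c x ≠ c y := hc x y hxy
      have h3 : c b ≠ c y := fun h => hne h.symm
      simp only [SimpleGraph.Walk.support_cons, SimpleGraph.Walk.support_nil,
        List.map_cons, List.map_nil]
      exact List.nodup_cons.2 ⟨by simp [h1, h3], List.nodup_cons.2
        ⟨by simp [h2], List.nodup_singleton _⟩⟩
  have h20 : (2 : ZMod 3) ≠ 0 := by decide
  -- every out-neighbour of b is a sink, hence equals r
  have hout : ∀ y, (G.Adj b y ∧ c y = c b + 1) → y = r := by
    intro y ⟨hadj, hcy⟩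
    apply hru
    rintro z ⟨hyz, hcz⟩
    have := key y hadj z hyz
    rw [this, hcy] at hcz
    apply h20
    have : c b + (1 + 1) = c b + 0 := by
      rw [← add_assoc, ← hcz, add_zero]
    have := add_left_cancel this
    linear_combination this
  -- every in-neighbour of b is a source
  have hin : ∀ y, (G.Adj y b ∧ c b = c y + 1) → ∀ z, ¬ (G.Adj z y ∧ c y = c z + 1) := by
    rintro y ⟨hadj, hcb⟩ z ⟨hzy, hcy⟩
    have hcz : c z = c b := key y hadj.symm z hzy.symm
    rw [hcy, hcz] at hcb
    apply h20
    have : c b + (1 + 1) = c b + 0 := by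
      rw [← add_assoc, ← hcb, add_zero]
    have := add_left_cancel this
    linear_combination this
  -- b has an out-neighbour
  have hbr : G.Adj b r ∧ c r = c b + 1 := by
    by_cases hsink : ∀ y, ¬ (G.Adj b y ∧ c y = c b + 1)
    · -- then b = r; derive a contradiction using the chain of length 5
      exfalso
      have hbeq : b = r := hru b hsink
      obtain ⟨l, hch, hlen⟩ := hheight
      match l, hlen with
      | [a₁, a₂, a₃, a₄, a₅], _ =>
        simp only [List.Chain', List.isChain_cons_cons] at hch
        obtain ⟨h12, h23, _⟩ := hch
        have hreach := reach_sink hacyc r hru a₃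
        obtain ⟨p, q, hpq, hqr⟩ := two_arcs_to_r a₃ hreach a₁ a₂ h12 h23
        rw [← hbeq] at hqr
        exact hin q ⟨hqr.1, hqr.2⟩ p hpq
    · push_neg at hsink
      obtain ⟨y, hy⟩ := hsink
      have := hout y hy
      subst this
      exact hy
  exact ⟨⟨hbr, hout⟩, hin, by
    rintro u w ⟨hub, hnub⟩ (rfl | hwb)
    · exact hnub
    · exact hin w hwb u⟩
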